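/- (Reversed radial Alexandrov–Bol inequality.) Let α ∈ [0,1), R > 0, and let g : [R,∞) → ℝ satisfy the exterior radial Bol hypothesis with parameter α, with exterior mass function m(r) = 2π∫_r^∞ s^{1−2α} e^{g(s)} ds. Assume m(R) < 8π(1−α). Then ( 2π R^{1−α} e^{g(R)/2} )² ≤ (1/2) · m(R) · ( 8π(1−α) − m(R) ). -/

import Mathlib

open Real MeasureTheory Metric Filter Topology RealInnerProductSpace

noncomputable section

/-- The plane `ℝ²`. -/
abbrev Pl := EuclideanSpace ℝ (Fin 2)

/-- The Laplacian `Δu = ∂²u/∂x₁² + ∂²u/∂x₂²` of a function on `ℝ²`. -/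
def lap (u : Pl → ℝ) (x : Pl) : ℝ :=
  ∑ i : Fin 2, fderiv ℝ (fun y => fderiv ℝ u y (EuclideanSpace.single i 1)) x
    (EuclideanSpace.single i 1)

/-- `g` satisfies the exterior radial Bol hypothesis with parameter `a` on `[R,∞)`:
it is continuous and strictly decreasing on `[R,∞)`, differentiable on `(R,∞)`, the
exterior mass `m(r) = 2π∫_r^∞ s^{1−2a} e^{g(s)} ds` is finite for every `r ≥ R`, and
`2πr·(−g'(r)) ≤ 8π(1−a) − m(r)` for every `r ∈ (R,∞)`. -/
def ExteriorBol (a R : ℝ) (g : ℝ → ℝ) : Prop :=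
  ContinuousOn g (Set.Ici R) ∧ StrictAntiOn g (Set.Ici R) ∧
  (∀ r ∈ Set.Ioi R, DifferentiableAt ℝ g r) ∧
  (∀ r ∈ Set.Ici R, IntegrableOn (fun s => s ^ (1 - 2*a) * Real.exp (g s)) (Set.Ioi r)) ∧
  (∀ r ∈ Set.Ioi R,
    2 * π * r * (-(deriv g r)) ≤
      8 * π * (1 - a) - 2 * π * ∫ s in Set.Ioi r, s ^ (1 - 2*a) * Real.exp (g s))

/-- Reversed radial Alexandrov–Bol inequality. -/
theorem radial_singular_bol_reversed (a R : ℝ) (ha : a ∈ Set.Ico (0:ℝ) 1) (hR : 0 < R)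
    (g : ℝ → ℝ) (hg : ExteriorBol a R g)
    (hmR : 2 * π * ∫ s in Set.Ioi R, s ^ (1 - 2*a) * Real.exp (g s) < 8 * π * (1 - a)) :
    (2 * π * R ^ (1-a) * Real.exp (g R / 2)) ^ 2 ≤
      (1/2) * (2 * π * ∫ s in Set.Ioi R, s ^ (1 - 2*a) * Real.exp (g s)) *
        (8 * π * (1 - a) - 2 * π * ∫ s in Set.Ioi R, s ^ (1 - 2*a) * Real.exp (g s)) := by
  obtain ⟨ha0, ha1⟩ := ha
  obtain ⟨hgc, hganti, hgdiff, hgint, hbol⟩ := hg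
  have hπ : (0:ℝ) < π := Real.pi_pos
  set f : ℝ → ℝ := fun s => s ^ (1 - 2*a) * Real.exp (g s) with hfdef
  set T : ℝ → ℝ := fun r => ∫ s in Set.Ioi r, f s with hTdef
  set B : ℝ → ℝ := fun r => 4*π^2 * (r ^ (2 - 2*a) * Real.exp (g r)) with hBdef
  set F : ℝ → ℝ := fun r => (1/2) * (2*π*T r) * (8*π*(1-a) - 2*π*T r) - B r with hFdef
  have hTR : T R = ∫ s in Set.Ioi R, f s := rfl
  have hfpos : ∀ s : ℝ, 0 < s → 0 < f s := fun s hs =>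
    mul_pos (Real.rpow_pos_of_pos hs _) (Real.exp_pos _)
  have hfcont : ContinuousOn f (Set.Ici R) := by
    apply ContinuousOn.mul
    · intro s hs
      exact (Real.continuousAt_rpow_const s _
        (Or.inl (ne_of_gt (lt_of_lt_of_le hR hs)))).continuousWithinAt
    · exact Real.continuous_exp.comp_continuousOn hgc
  have hInt : ∀ r, R ≤ r → IntegrableOn f (Set.Ioi r) := fun r hr => hgint r hr
  have hIntIoc : ∀ r s : ℝ, R ≤ r → IntegrableOn f (Set.Ioc r s) := fun r s hr =>
    (hInt r hr).mono_set Set.Ioc_subset_Ioi_self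
  have hsplit : ∀ r, R ≤ r → T R = (∫ s in R..r, f s) + T r := by
    intro r hr
    rw [intervalIntegral.integral_of_le hr, hTdef]
    rw [← MeasureTheory.setIntegral_union (Set.Ioc_disjoint_Ioi le_rfl) measurableSet_Ioi
      (hIntIoc R r le_rfl) (hInt r hr), Set.Ioc_union_Ioi_eq_Ioi hr]
  have hTnonneg : ∀ r, R ≤ r → 0 ≤ T r := by
    intro r hr
    apply MeasureTheory.setIntegral_nonneg measurableSet_Ioi
    intro s hs
    exact (hfpos s (lt_trans (lt_of_lt_of_le hR hr) hs)).le
  -- derivative of T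
  have hTderiv : ∀ r ∈ Set.Ioi R, HasDerivAt T (-(f r)) r := by
    intro r hr
    have hr' : R < r := hr
    have hprim : HasDerivAt (fun u => ∫ s in R..u, f s) (f r) r := by
      refine intervalIntegral.integral_hasDerivAt_right
        ((intervalIntegrable_iff_integrableOn_Ioc_of_le hr'.le).2 (hIntIoc R r le_rfl)) ?_ ?_
      · exact (hfcont.mono Set.Ioi_subset_Ici_self).stronglyMeasurableAtFilter isOpen_Ioi r hr
      · exact (hfcont.mono Set.Ioi_subset_Ici_self).continuousAt (isOpen_Ioi.mem_nhds hr)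
    have heq : T =ᶠ[𝓝 r] fun u => T R - ∫ s in R..u, f s := by
      filter_upwards [isOpen_Ioi.mem_nhds hr] with u hu
      have := hsplit u (le_of_lt hu)
      linarith
    exact HasDerivAt.congr_of_eventuallyEq (hprim.const_sub (T R)) heq
  -- derivative of B
  have hBderiv : ∀ r ∈ Set.Ioi R, HasDerivAt B
      (4*π^2 * ((2 - 2*a) * r ^ ((2 - 2*a) - 1) * Real.exp (g r)
        + r ^ (2 - 2*a) * (Real.exp (g r) * deriv g r))) r := by
    intro r hr
    have hr0 : (0:ℝ) < r := lt_trans hR hr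
    have h1 : HasDerivAt (fun x : ℝ => x ^ (2 - 2*a)) ((2 - 2*a) * r ^ ((2 - 2*a) - 1)) r :=
      Real.hasDerivAt_rpow_const (Or.inl hr0.ne')
    have h2 : HasDerivAt (fun x => Real.exp (g x)) (Real.exp (g r) * deriv g r) r :=
      ((hgdiff r hr).hasDerivAt).exp
    exact (h1.mul h2).const_mul (4*π^2)
  -- derivative of F and sign
  have hFderiv : ∀ r ∈ Set.Ioi R, HasDerivAt F
      ((1/2) * (2*π*(-(f r))) * (8*π*(1-a) - 2*π*T r)
        + ((1/2) * (2*π*T r)) * (-(2*π*(-(f r))))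
        - (4*π^2 * ((2 - 2*a) * r ^ ((2 - 2*a) - 1) * Real.exp (g r)
            + r ^ (2 - 2*a) * (Real.exp (g r) * deriv g r)))) r := by
    intro r hr
    have hT := hTderiv r hr
    have hA : HasDerivAt (fun u => (1/2) * (2*π*T u)) ((1/2) * (2*π*(-(f r)))) r :=
      (hT.const_mul (2*π)).const_mul (1/2)
    have hS : HasDerivAt (fun u => 8*π*(1-a) - 2*π*T u) (-(2*π*(-(f r)))) r :=
      (hT.const_mul (2*π)).const_sub (8*π*(1-a))
    exact (hA.mul hS).sub (hBderiv r hr)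
  have hFderiv_nonpos : ∀ r ∈ Set.Ioi R,
      ((1/2) * (2*π*(-(f r))) * (8*π*(1-a) - 2*π*T r)
        + ((1/2) * (2*π*T r)) * (-(2*π*(-(f r))))
        - (4*π^2 * ((2 - 2*a) * r ^ ((2 - 2*a) - 1) * Real.exp (g r)
            + r ^ (2 - 2*a) * (Real.exp (g r) * deriv g r)))) ≤ 0 := by
    intro r hr
    have hr0 : (0:ℝ) < r := lt_trans hR hr
    have hb := hbol r hr
    have hTr : (∫ s in Set.Ioi r, f s) = T r := rfl
    rw [hTr] at hb
    have he1 : r ^ ((2 - 2*a) - 1) = r ^ (1 - 2*a) := by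
      congr 1
      ring
    have he2 : r ^ (2 - 2*a) = r ^ (1 - 2*a) * r := by
      rw [show (2 - 2*a) = (1 - 2*a) + 1 by ring, Real.rpow_add hr0, Real.rpow_one]
    rw [he1, he2]
    simp only [hfdef]
    have hfact : (1/2) * (2*π*(-(r ^ (1 - 2*a) * Real.exp (g r)))) * (8*π*(1-a) - 2*π*T r)
        + ((1/2) * (2*π*T r)) * (-(2*π*(-(r ^ (1 - 2*a) * Real.exp (g r)))))
        - (4*π^2 * ((2 - 2*a) * r ^ (1 - 2*a) * Real.exp (g r)
            + (r ^ (1 - 2*a) * r) * (Real.exp (g r) * deriv g r)))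
        = -(2*π*(r ^ (1 - 2*a) * Real.exp (g r)))
            * ((8*π*(1-a) - 2*π*T r) - 2*π*r*(-(deriv g r))) := by ring
    rw [hfact]
    apply mul_nonpos_of_nonpos_of_nonneg
    · have : 0 < 2*π*(r ^ (1 - 2*a) * Real.exp (g r)) := by positivity
      linarith
    · linarith
  -- continuity of T and F on [R, ∞)
  have hTcont : ContinuousOn T (Set.Ici R) := by
    intro r hr
    have hr1 : R ≤ r := hr
    have hii : IntervalIntegrable f volume (min R R) (max R (r+1)) := by
      rw [min_self, max_eq_right (by linarith)]
      exact (intervalIntegrable_iff_integrableOn_Ioc_of_le (by linarith)).2 (hIntIoc R (r+1) le_rfl)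
    have h1 : ContinuousWithinAt (fun u => ∫ s in R..u, f s) (Set.Icc R (r+1)) r :=
      intervalIntegral.continuousWithinAt_primitive (measure_singleton r) hii
    have h2 : ContinuousWithinAt (fun u => ∫ s in R..u, f s) (Set.Ici R) r := by
      apply h1.mono_of_mem_nhdsWithin
      rw [mem_nhdsWithin]
      exact ⟨Set.Iio (r+1), isOpen_Iio, by simp, fun x hx => ⟨hx.2, le_of_lt hx.1⟩⟩
    have h3 : ContinuousWithinAt (fun u => T R - ∫ s in R..u, f s) (Set.Ici R) r :=
      continuousWithinAt_const.sub h2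
    apply h3.congr
    · intro u hu
      have := hsplit u hu
      linarith
    · have := hsplit r hr1
      linarith
  have hBcont : ContinuousOn B (Set.Ici R) := by
    apply ContinuousOn.mul continuousOn_const
    apply ContinuousOn.mul
    · intro s hs
      exact (Real.continuousAt_rpow_const s _
        (Or.inl (ne_of_gt (lt_of_lt_of_le hR hs)))).continuousWithinAt
    · exact Real.continuous_exp.comp_continuousOn hgc
  have hFcont : ContinuousOn F (Set.Ici R) :=
    ((continuousOn_const.mul (continuousOn_const.mul hTcont)).mul
      (continuousOn_const.sub (continuousOn_const.mul hTcont))).sub hBcont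
  -- F is antitone
  have hFanti : AntitoneOn F (Set.Ici R) := by
    apply antitoneOn_of_deriv_nonpos (convex_Ici R) hFcont
    · intro x hx
      rw [interior_Ici] at hx
      exact (hFderiv x hx).differentiableAt.differentiableWithinAt
    · intro x hx
      rw [interior_Ici] at hx
      rw [(hFderiv x hx).deriv]
      exact hFderiv_nonpos x hx
  -- T tends to zero at infinity
  have hTtend : Filter.Tendsto T Filter.atTop (nhds 0) := by
    have h1 : Filter.Tendsto (fun r => ∫ s in R..r, f s) Filter.atTop (nhds (T R)) :=
      MeasureTheory.intervalIntegral_tendsto_integral_Ioi R (hInt R le_rfl) Filter.tendsto_id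
    have h2 : Filter.Tendsto (fun r => T R - ∫ s in R..r, f s) Filter.atTop (nhds (T R - T R)) :=
      Filter.Tendsto.sub tendsto_const_nhds h1
    rw [sub_self] at h2
    apply h2.congr'
    filter_upwards [Filter.eventually_ge_atTop R] with r hr
    have := hsplit r hr
    linarith
  -- bound B by the tail of T
  have hBbound : ∀ s : ℝ, 2*R ≤ s → B s ≤ 16*π^2 * T (s/2) := by
    intro s hs
    have hs0 : (0:ℝ) < s := by linarith
    have hr0 : (0:ℝ) < s/2 := by linarith
    have hrR : R ≤ s/2 := by linarith
    have hsR : R ≤ s := by linarith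
    have key : ∀ t ∈ Set.Ioc (s/2) s, (s ^ (1 - 2*a) / 2) * Real.exp (g s) ≤ f t := by
      intro t ht
      have ht0 : (0:ℝ) < t := lt_trans hr0 ht.1
      have htR : R ≤ t := le_trans hrR ht.1.le
      have hgt : g s ≤ g t := by
        rcases eq_or_lt_of_le ht.2 with h | h
        · rw [h]
        · exact (hganti htR hsR h).le
      have hp : s ^ (1 - 2*a) / 2 ≤ t ^ (1 - 2*a) := by
        rcases le_or_gt 0 (1 - 2*a) with hp0 | hp0
        · have h1 : (s/2) ^ (1 - 2*a) ≤ t ^ (1 - 2*a) :=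
            Real.rpow_le_rpow hr0.le ht.1.le hp0
          have h2 : s ^ (1 - 2*a) / 2 ≤ (s/2) ^ (1 - 2*a) := by
            rw [Real.div_rpow hs0.le (by norm_num : (0:ℝ) ≤ 2)]
            have h3 : (2:ℝ) ^ (1 - 2*a) ≤ 2 := by
              calc (2:ℝ) ^ (1 - 2*a) ≤ 2 ^ (1:ℝ) :=
                    Real.rpow_le_rpow_of_exponent_le one_le_two (by linarith)
                _ = 2 := Real.rpow_one 2
            have h4 : (0:ℝ) < 2 ^ (1 - 2*a) := Real.rpow_pos_of_pos (by norm_num) _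
            have h5 : (0:ℝ) ≤ s ^ (1 - 2*a) := (Real.rpow_pos_of_pos hs0 _).le
            exact div_le_div_of_nonneg_left h5 h4 h3
          linarith
        · have h1 : s ^ (1 - 2*a) ≤ t ^ (1 - 2*a) :=
            Real.rpow_le_rpow_of_nonpos ht0 ht.2 hp0.le
          have h2 : (0:ℝ) < s ^ (1 - 2*a) := Real.rpow_pos_of_pos hs0 _
          linarith
      calc (s ^ (1 - 2*a) / 2) * Real.exp (g s)
          ≤ t ^ (1 - 2*a) * Real.exp (g t) := by
            apply mul_le_mul hp (Real.exp_le_exp.2 hgt) (Real.exp_pos _).le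
            exact (Real.rpow_pos_of_pos ht0 _).le
        _ = f t := rfl
    have h1 : (s ^ (1 - 2*a) / 2 * Real.exp (g s)) * (volume (Set.Ioc (s/2) s)).toReal
        ≤ ∫ t in Set.Ioc (s/2) s, f t := by
      have h := MeasureTheory.setIntegral_ge_of_const_le measurableSet_Ioc
        (by exact (measure_Ioc_lt_top).ne) key (hIntIoc (s/2) s hrR)
      rw [smul_eq_mul, mul_comm, MeasureTheory.measureReal_def] at h
      exact h
    have hvol : (volume (Set.Ioc (s/2) s)).toReal = s/2 := by
      rw [Real.volume_Ioc, ENNReal.toReal_ofReal (by linarith)]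
      ring
    rw [hvol] at h1
    have h2 : ∫ t in Set.Ioc (s/2) s, f t ≤ T (s/2) := by
      apply MeasureTheory.setIntegral_mono_set (hInt _ hrR)
      · exact (MeasureTheory.ae_restrict_iff' measurableSet_Ioi).2
          (Filter.Eventually.of_forall fun t ht => (hfpos t (lt_trans hr0 ht)).le)
      · exact HasSubset.Subset.eventuallyLE Set.Ioc_subset_Ioi_self
    have he2 : s ^ (2 - 2*a) = s ^ (1 - 2*a) * s := by
      rw [show (2 - 2*a) = (1 - 2*a) + 1 by ring, Real.rpow_add hs0, Real.rpow_one]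
    have h3 := le_trans h1 h2
    have h4 := mul_le_mul_of_nonneg_left h3 (by positivity : (0:ℝ) ≤ 16*π^2)
    simp only [hBdef]
    rw [he2]
    nlinarith [h4]
  -- B tends to zero at infinity
  have hBtend : Filter.Tendsto B Filter.atTop (nhds 0) := by
    have h1 : Filter.Tendsto (fun s : ℝ => s/2) Filter.atTop Filter.atTop :=
      Filter.tendsto_id.atTop_div_const (by norm_num)
    have h2 : Filter.Tendsto (fun s : ℝ => 16*π^2 * T (s/2)) Filter.atTop (nhds (16*π^2 * 0)) :=
      (hTtend.comp h1).const_mul _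
    rw [mul_zero] at h2
    apply squeeze_zero' ?_ ?_ h2
    · filter_upwards [Filter.eventually_gt_atTop (0:ℝ)] with s hs
      simp only [hBdef]
      have : 0 < s ^ (2 - 2*a) * Real.exp (g s) :=
        mul_pos (Real.rpow_pos_of_pos hs _) (Real.exp_pos _)
      positivity
    · filter_upwards [Filter.eventually_ge_atTop (2*R)] with s hs
      exact hBbound s hs
  -- F tends to zero at infinity
  have hFtend : Filter.Tendsto F Filter.atTop (nhds 0) := by
    have hm : Filter.Tendsto (fun r => 2*π*T r) Filter.atTop (nhds (2*π*0)) :=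
      hTtend.const_mul (2*π)
    have h := ((hm.const_mul (1/2)).mul ((tendsto_const_nhds (x := 8*π*(1-a))).sub hm)).sub hBtend
    have he : (1/2) * (2*π*0) * (8*π*(1-a) - 2*π*0) - 0 = 0 := by ring
    rw [he] at h
    exact h
  -- conclude F R ≥ 0
  have hF0 : 0 ≤ F R := by
    apply le_of_tendsto hFtend
    filter_upwards [Filter.eventually_ge_atTop R] with s hs
    exact hFanti Set.self_mem_Ici hs hs
  -- rewrite the boundary term
  have hBR : (2 * π * R ^ (1-a) * Real.exp (g R / 2)) ^ 2 = B R := by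
    have h1 : R ^ (1-a) * R ^ (1-a) = R ^ (2 - 2*a) := by
      rw [← Real.rpow_add hR]
      congr 1
      ring
    have h2 : Real.exp (g R / 2) * Real.exp (g R / 2) = Real.exp (g R) := by
      rw [← Real.exp_add]
      congr 1
      ring
    simp only [hBdef]
    rw [← h1, ← h2]
    ring
  rw [← hTR, hBR]
  simp only [hFdef] at hF0
  linarith
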